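/- For any two density matrices ρ₁, ρ₂, the superfidelity bounds the trace distance: 1 - D_tr(ρ₁,ρ₂) ≤ G(ρ₁,ρ₂), where D_tr(ρ₁,ρ₂) = (1/2)·tr|ρ₁ - ρ₂|. -/

import Mathlib

open Matrix ComplexOrder

noncomputable def sG {N : ℕ} (ρ σ : Matrix (Fin N) (Fin N) ℂ) : ℝ :=
  (trace (ρ * σ)).re +
    Real.sqrt (1 - (trace (ρ * ρ)).re) * Real.sqrt (1 - (trace (σ * σ)).re)

namespace SFAux

lemma trace_diagonal_mul' {N : ℕ} (d : Fin N → ℂ) (M : Matrix (Fin N) (Fin N) ℂ) :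
    trace (diagonal d * M) = ∑ i, d i * M i i := by
  simp [Matrix.trace, Matrix.diag, Matrix.diagonal_mul]

lemma trace_mul_eq' {N : ℕ} {A : Matrix (Fin N) (Fin N) ℂ} (hA : A.IsHermitian)
    (B : Matrix (Fin N) (Fin N) ℂ) :
    trace (A * B) = ∑ i, (hA.eigenvalues i : ℂ) *
      ((star (hA.eigenvectorUnitary : Matrix (Fin N) (Fin N) ℂ) * B *
        (hA.eigenvectorUnitary : Matrix (Fin N) (Fin N) ℂ)) i i) := by
  set U : Matrix (Fin N) (Fin N) ℂ := (hA.eigenvectorUnitary : Matrix (Fin N) (Fin N) ℂ) with hU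
  conv_lhs => rw [hA.spectral_theorem]
  rw [Unitary.conjStarAlgAut_apply, ← hU]
  rw [mul_assoc (U * _), Matrix.trace_mul_comm (U * _)]
  simp only [← mul_assoc]
  rw [Matrix.trace_mul_comm, trace_diagonal_mul']
  rfl

lemma conj_self_eq_diagonal {N : ℕ} {A : Matrix (Fin N) (Fin N) ℂ} (hA : A.IsHermitian) :
    star (hA.eigenvectorUnitary : Matrix (Fin N) (Fin N) ℂ) * A *
      (hA.eigenvectorUnitary : Matrix (Fin N) (Fin N) ℂ) =
      diagonal (RCLike.ofReal ∘ hA.eigenvalues) := by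
  set U : Matrix (Fin N) (Fin N) ℂ := (hA.eigenvectorUnitary : Matrix (Fin N) (Fin N) ℂ) with hU
  have h1 : star U * U = 1 := Matrix.mem_unitaryGroup_iff'.mp hA.eigenvectorUnitary.2
  conv_lhs => rw [hA.spectral_theorem]
  rw [Unitary.conjStarAlgAut_apply, ← hU]
  rw [show star U * (U * diagonal (RCLike.ofReal ∘ hA.eigenvalues) * star U) * U
      = (star U * U) * diagonal (RCLike.ofReal ∘ hA.eigenvalues) * (star U * U) by
        simp only [mul_assoc], h1, one_mul, mul_one]

lemma trace_sq_eq {N : ℕ} {A : Matrix (Fin N) (Fin N) ℂ} (hA : A.IsHermitian) :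
    (trace (A * A)).re = ∑ i, (hA.eigenvalues i) ^ 2 := by
  rw [trace_mul_eq' hA A, conj_self_eq_diagonal hA]
  simp [Complex.re_sum, ← Complex.ofReal_pow, sq, diagonal_apply_eq]

lemma trace_eq_sum_eig {N : ℕ} {A : Matrix (Fin N) (Fin N) ℂ} (hA : A.IsHermitian) :
    (trace A).re = ∑ i, hA.eigenvalues i := by
  have h := trace_mul_eq' hA 1
  rw [mul_one] at h
  set U : Matrix (Fin N) (Fin N) ℂ := (hA.eigenvectorUnitary : Matrix (Fin N) (Fin N) ℂ) with hU
  have h1 : star U * U = 1 := Matrix.mem_unitaryGroup_iff'.mp hA.eigenvectorUnitary.2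
  rw [mul_one, h1] at h
  simp [h, Complex.re_sum, Matrix.one_apply]

lemma conj_diag_nonneg {N : ℕ} {ρ : Matrix (Fin N) (Fin N) ℂ} (hρ : ρ.PosSemidef)
    (U : Matrix (Fin N) (Fin N) ℂ) (i : Fin N) :
    0 ≤ ((star U * ρ * U) i i).re := by
  have hM : (star U * ρ * U).PosSemidef := by
    rw [Matrix.star_eq_conjTranspose]
    exact hρ.conjTranspose_mul_mul_same U
  have h0 : (0 : ℂ) ≤ (star U * ρ * U) i i := by
    exact hM.diag_nonneg
  exact (Complex.le_def.mp h0).1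

lemma conj_diag_sum {N : ℕ} {ρ : Matrix (Fin N) (Fin N) ℂ} (ht : trace ρ = 1)
    (U : Matrix (Fin N) (Fin N) ℂ) (hU : U ∈ unitaryGroup (Fin N) ℂ) :
    ∑ i, ((star U * ρ * U) i i).re = 1 := by
  have h1 : U * star U = 1 := Matrix.mem_unitaryGroup_iff.mp hU
  have h : trace (star U * ρ * U) = 1 := by
    rw [Matrix.trace_mul_cycle, h1, one_mul, ht]
  calc ∑ i, ((star U * ρ * U) i i).re = (trace (star U * ρ * U)).re := by
        simp [Matrix.trace, Matrix.diag, Complex.re_sum]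
    _ = 1 := by rw [h]; rfl

lemma trace_mul_density_le {N : ℕ} {A : Matrix (Fin N) (Fin N) ℂ} (hA : A.IsHermitian)
    {ρ : Matrix (Fin N) (Fin N) ℂ} (hρ : ρ.PosSemidef) (ht : trace ρ = 1) :
    (trace (A * ρ)).re ≤ ∑ i, max (hA.eigenvalues i) 0 := by
  set U : Matrix (Fin N) (Fin N) ℂ := (hA.eigenvectorUnitary : Matrix (Fin N) (Fin N) ℂ) with hU
  set d : Fin N → ℝ := fun i => ((star U * ρ * U) i i).re with hd
  have hd0 : ∀ i, 0 ≤ d i := fun i => conj_diag_nonneg hρ U i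
  have hdsum : ∑ i, d i = 1 := conj_diag_sum ht U hA.eigenvectorUnitary.2
  have hd1 : ∀ i, d i ≤ 1 := by
    intro i
    rw [← hdsum]
    exact Finset.single_le_sum (fun j _ => hd0 j) (Finset.mem_univ i)
  have hre : (trace (A * ρ)).re = ∑ i, hA.eigenvalues i * d i := by
    rw [trace_mul_eq' hA ρ]
    simp [Complex.re_sum, Complex.mul_re, hd]
    rfl
  rw [hre]
  apply Finset.sum_le_sum
  intro i _
  rcases le_or_gt 0 (hA.eigenvalues i) with h | h
  · calc hA.eigenvalues i * d i ≤ hA.eigenvalues i * 1 :=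
        mul_le_mul_of_nonneg_left (hd1 i) h
    _ ≤ max (hA.eigenvalues i) 0 := by simp
  · calc hA.eigenvalues i * d i ≤ 0 := mul_nonpos_of_nonpos_of_nonneg h.le (hd0 i)
    _ ≤ max (hA.eigenvalues i) 0 := le_max_right _ _

lemma trace_mul_density_ge {N : ℕ} {A : Matrix (Fin N) (Fin N) ℂ} (hA : A.IsHermitian)
    {ρ : Matrix (Fin N) (Fin N) ℂ} (hρ : ρ.PosSemidef) (ht : trace ρ = 1) :
    ∑ i, min (hA.eigenvalues i) 0 ≤ (trace (A * ρ)).re := by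
  set U : Matrix (Fin N) (Fin N) ℂ := (hA.eigenvectorUnitary : Matrix (Fin N) (Fin N) ℂ) with hU
  set d : Fin N → ℝ := fun i => ((star U * ρ * U) i i).re with hd
  have hd0 : ∀ i, 0 ≤ d i := fun i => conj_diag_nonneg hρ U i
  have hdsum : ∑ i, d i = 1 := conj_diag_sum ht U hA.eigenvectorUnitary.2
  have hd1 : ∀ i, d i ≤ 1 := by
    intro i
    rw [← hdsum]
    exact Finset.single_le_sum (fun j _ => hd0 j) (Finset.mem_univ i)
  have hre : (trace (A * ρ)).re = ∑ i, hA.eigenvalues i * d i := by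
    rw [trace_mul_eq' hA ρ]
    simp [Complex.re_sum, Complex.mul_re, hd]
    rfl
  rw [hre]
  apply Finset.sum_le_sum
  intro i _
  rcases le_or_gt 0 (hA.eigenvalues i) with h | h
  · calc min (hA.eigenvalues i) 0 ≤ 0 := min_le_right _ _
    _ ≤ hA.eigenvalues i * d i := mul_nonneg h (hd0 i)
  · calc min (hA.eigenvalues i) 0 ≤ hA.eigenvalues i := min_le_left _ _
    _ = hA.eigenvalues i * 1 := (mul_one _).symm
    _ ≤ hA.eigenvalues i * d i := by
        apply mul_le_mul_of_nonpos_left (hd1 i) h.le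

lemma psd_trace_sq_le_one {N : ℕ} {ρ : Matrix (Fin N) (Fin N) ℂ} (hρ : ρ.PosSemidef)
    (ht : trace ρ = 1) : (trace (ρ * ρ)).re ≤ 1 := by
  have hs : ∑ i, hρ.1.eigenvalues i = 1 := by
    rw [← trace_eq_sum_eig hρ.1, ht]; rfl
  have h0 : ∀ i, 0 ≤ hρ.1.eigenvalues i := hρ.eigenvalues_nonneg
  have h1 : ∀ i, hρ.1.eigenvalues i ≤ 1 := by
    intro i; rw [← hs]
    exact Finset.single_le_sum (fun j _ => h0 j) (Finset.mem_univ i)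
  rw [trace_sq_eq hρ.1]
  calc ∑ i, hρ.1.eigenvalues i ^ 2 ≤ ∑ i, hρ.1.eigenvalues i := by
        apply Finset.sum_le_sum
        intro i _
        nlinarith [h0 i, h1 i]
    _ = 1 := hs

end SFAux

open SFAux in
theorem one_sub_trace_distance_le_superfidelity {N : ℕ}
    (ρ₁ ρ₂ : Matrix (Fin N) (Fin N) ℂ)
    (h₁ : ρ₁.PosSemidef) (h₂ : ρ₂.PosSemidef)
    (ht₁ : trace ρ₁ = 1) (ht₂ : trace ρ₂ = 1)
    (hH : (ρ₁ - ρ₂).IsHermitian) :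
    1 - (1 / 2) * ∑ i, |hH.eigenvalues i| ≤ sG ρ₁ ρ₂ := by
  set lam := hH.eigenvalues with hlam
  set t : ℝ := ∑ i, |lam i| with htdef
  set a : ℝ := (trace (ρ₁ * ρ₁)).re with hadef
  set b : ℝ := (trace (ρ₂ * ρ₂)).re with hbdef
  set r : ℝ := (trace (ρ₁ * ρ₂)).re with hrdef
  have hsum0 : ∑ i, lam i = 0 := by
    rw [hlam, ← trace_eq_sum_eig hH, Matrix.trace_sub, ht₁, ht₂]
    simp
  have hmaxsum : ∑ i, max (lam i) 0 = t / 2 := by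
    have hpt : ∀ i, max (lam i) 0 = (|lam i| + lam i) / 2 := by
      intro i
      rcases le_total 0 (lam i) with h | h
      · rw [max_eq_left h, abs_of_nonneg h]; ring
      · rw [max_eq_right h, abs_of_nonpos h]; ring
    rw [Finset.sum_congr rfl (fun i _ => hpt i), ← Finset.sum_div,
      Finset.sum_add_distrib, hsum0, add_zero, htdef]
  have hminsum : ∑ i, min (lam i) 0 = -(t / 2) := by
    have hpt : ∀ i, min (lam i) 0 = (lam i - |lam i|) / 2 := by
      intro i
      rcases le_total 0 (lam i) with h | h
      · rw [min_eq_right h, abs_of_nonneg h]; ring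
      · rw [min_eq_left h, abs_of_nonpos h]; ring
    rw [Finset.sum_congr rfl (fun i _ => hpt i), ← Finset.sum_div,
      Finset.sum_sub_distrib, hsum0, zero_sub, htdef]
    ring
  have hu : a - r ≤ t / 2 := by
    have h := trace_mul_density_le hH h₁ ht₁
    rw [hmaxsum] at h
    have he : (trace ((ρ₁ - ρ₂) * ρ₁)).re = a - r := by
      rw [Matrix.sub_mul, Matrix.trace_sub, Matrix.trace_mul_comm ρ₂ ρ₁]
      simp [hadef, hrdef, Complex.sub_re]
    rw [he] at h
    exact h
  have hv : b - r ≤ t / 2 := by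
    have h := trace_mul_density_ge hH h₂ ht₂
    rw [hminsum] at h
    have he : (trace ((ρ₁ - ρ₂) * ρ₂)).re = r - b := by
      rw [Matrix.sub_mul, Matrix.trace_sub]
      simp [hbdef, hrdef, Complex.sub_re]
    rw [he] at h
    linarith
  have ha1 : a ≤ 1 := psd_trace_sq_le_one h₁ ht₁
  have hb1 : b ≤ 1 := psd_trace_sq_le_one h₂ ht₂
  show 1 - 1 / 2 * t ≤ r + Real.sqrt (1 - a) * Real.sqrt (1 - b)
  set x : ℝ := Real.sqrt (1 - a) with hxdef
  set y : ℝ := Real.sqrt (1 - b) with hydef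
  have hx2 : x ^ 2 = 1 - a := Real.sq_sqrt (by linarith)
  have hy2 : y ^ 2 = 1 - b := Real.sq_sqrt (by linarith)
  have hx0 : 0 ≤ x := Real.sqrt_nonneg _
  have hy0 : 0 ≤ y := Real.sqrt_nonneg _
  rcases le_total a b with hab | hab
  · have hyx : y ≤ x := Real.sqrt_le_sqrt (by linarith)
    nlinarith [mul_nonneg (sub_nonneg.2 hyx) hy0]
  · have hxy : x ≤ y := Real.sqrt_le_sqrt (by linarith)
    nlinarith [mul_nonneg (sub_nonneg.2 hxy) hx0]
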